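/- Let ω : ℝⁿ → (0,∞) be a positive measurable function that is uniformly bounded from below, i.e. inf_{ξ∈ℝⁿ} ω(ξ) = c > 0, and satisfies the δ condition (G) for some 0 < δ < 1. Then ω satisfies the sub-multiplicative condition (SM). -/
import Mathlib


open MeasureTheory

/-- The δ condition (G) with parameter `0 < δ < 1`: for some `C > 0`,
`ω ξ ≤ C * (ω η * ω (ξ-η)^δ + ω η ^ δ * ω (ξ-η))` for all `ξ, η`. -/
def SatisfiesDeltaCondition {n : ℕ} (ω : EuclideanSpace ℝ (Fin n) → ℝ) (δ : ℝ) : Prop :=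
  ∃ C : ℝ, 0 < C ∧ ∀ ξ η, ω ξ ≤ C * (ω η * ω (ξ - η) ^ δ + ω η ^ δ * ω (ξ - η))

/-- The sub-multiplicative condition (SM): for some `C > 0`,
`ω ξ ≤ C * ω (ξ-η) * ω η` for all `ξ, η`. -/
def IsSubMultiplicative {n : ℕ} (ω : EuclideanSpace ℝ (Fin n) → ℝ) : Prop :=
  ∃ C : ℝ, 0 < C ∧ ∀ ξ η, ω ξ ≤ C * (ω (ξ - η) * ω η)

/-- A positive measurable function on `ℝⁿ`, uniformly bounded from below (with infimum
`c > 0`) and satisfying the δ condition (G) for some `0 < δ < 1`, satisfies the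
sub-multiplicative condition (SM). -/
theorem subMultiplicative_of_deltaCondition_of_boundedBelow {n : ℕ}
    (ω : EuclideanSpace ℝ (Fin n) → ℝ) (c δ : ℝ)
    (hω_pos : ∀ ξ, 0 < ω ξ) (hω_meas : Measurable ω)
    (hc : 0 < c) (hinf : IsGLB (Set.range ω) c)
    (hδ₀ : 0 < δ) (hδ₁ : δ < 1)
    (hG : SatisfiesDeltaCondition ω δ) :
    IsSubMultiplicative ω := by
  obtain ⟨C, hC, hGle⟩ := hG
  have hlb : ∀ ξ, c ≤ ω ξ := fun ξ => hinf.1 ⟨ξ, rfl⟩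
  have key : ∀ ξ, ω ξ ^ δ ≤ c ^ (δ - 1) * ω ξ := by
    intro ξ
    have h1 : ω ξ ^ (δ - 1) ≤ c ^ (δ - 1) :=
      Real.rpow_le_rpow_of_nonpos hc (hlb ξ) (by linarith)
    calc ω ξ ^ δ = ω ξ ^ (δ - 1) * ω ξ := by
          rw [← Real.rpow_add_one (hω_pos ξ).ne']; ring_nf
      _ ≤ c ^ (δ - 1) * ω ξ := by
          exact mul_le_mul_of_nonneg_right h1 (hω_pos ξ).le
  refine ⟨2 * C * c ^ (δ - 1), by positivity, fun ξ η => ?_⟩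
  have h2 := hGle ξ η
  have h3 : ω η * ω (ξ - η) ^ δ ≤ c ^ (δ - 1) * (ω (ξ - η) * ω η) := by
    have := mul_le_mul_of_nonneg_left (key (ξ - η)) (hω_pos η).le
    nlinarith [this]
  have h4 : ω η ^ δ * ω (ξ - η) ≤ c ^ (δ - 1) * (ω (ξ - η) * ω η) := by
    have := mul_le_mul_of_nonneg_right (key η) (hω_pos (ξ - η)).le
    nlinarith [this]
  nlinarith [h2, h3, h4, mul_pos (hω_pos (ξ - η)) (hω_pos η), hC]
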